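/- If β·ρ ≥ γ, then b* = (β·ρ − γ)/((γ + 1)·β·ρ) satisfies 0 ≤ b* < 1 and min(γ_p(b*), γ_{s→p}(b*)) ≥ γ, and b* maximizes the secondary SNR γ_s(b) = b·g·ρ over all b ∈ [0, 1) satisfying min(γ_p(b), γ_{s→p}(b)) ≥ γ; if β·ρ < γ, then no b ∈ [0, 1) satisfies min(γ_p(b), γ_{s→p}(b)) ≥ γ. -/
import Mathlib

private lemma key (ρ γ c b : ℝ) (hρ : 0 < ρ) (hγ : 0 < γ) (hc : 0 < c) (hb : 0 ≤ b) :
    γ ≤ (1 - b) * c / (b * c + 1 / ρ) ↔ b * ((γ + 1) * c * ρ) ≤ c * ρ - γ := by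
  have hd : 0 < b * c + 1 / ρ := by positivity
  rw [le_div_iff₀ hd]
  have hinv : 1 / ρ * ρ = 1 := by field_simp
  constructor
  · intro H; nlinarith [mul_le_mul_of_nonneg_right H hρ.le]
  · intro H; nlinarith [mul_le_mul_of_nonneg_right H hρ.le]

/-- With `γ_p b = (1-b)·h/(b·h + 1/ρ)`, `γ_sp b = (1-b)·g/(b·g + 1/ρ)`,
`γ_s b = b·g·ρ` and `β = min h g`:
if `β·ρ ≥ γ`, then `b* = (β·ρ - γ)/((γ+1)·β·ρ)` satisfies `0 ≤ b* < 1`, meets the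
QoS constraint `min (γ_p b*) (γ_sp b*) ≥ γ`, and maximizes the secondary SNR `γ_s b`
over all feasible `b ∈ [0,1)`; if `β·ρ < γ`, no `b ∈ [0,1)` is feasible. -/
theorem stmt1 (ρ h g γ : ℝ) (hρ : 0 < ρ) (hh : 0 < h) (hg : 0 < g) (hγ : 0 < γ) :
    (min h g * ρ ≥ γ →
      (0 ≤ (min h g * ρ - γ) / ((γ + 1) * (min h g) * ρ) ∧
        (min h g * ρ - γ) / ((γ + 1) * (min h g) * ρ) < 1) ∧
      min ((1 - (min h g * ρ - γ) / ((γ + 1) * (min h g) * ρ)) * h /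
            ((min h g * ρ - γ) / ((γ + 1) * (min h g) * ρ) * h + 1 / ρ))
          ((1 - (min h g * ρ - γ) / ((γ + 1) * (min h g) * ρ)) * g /
            ((min h g * ρ - γ) / ((γ + 1) * (min h g) * ρ) * g + 1 / ρ)) ≥ γ ∧
      (∀ b : ℝ, 0 ≤ b → b < 1 →
        min ((1 - b) * h / (b * h + 1 / ρ)) ((1 - b) * g / (b * g + 1 / ρ)) ≥ γ →
        b * g * ρ ≤ (min h g * ρ - γ) / ((γ + 1) * (min h g) * ρ) * g * ρ)) ∧
    (min h g * ρ < γ →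
      ∀ b : ℝ, 0 ≤ b → b < 1 →
        ¬ min ((1 - b) * h / (b * h + 1 / ρ)) ((1 - b) * g / (b * g + 1 / ρ)) ≥ γ) := by
  set β := min h g with hβdef
  have hβ : 0 < β := lt_min hh hg
  have hβh : β ≤ h := min_le_left _ _
  have hβg : β ≤ g := min_le_right _ _
  have hD : 0 < (γ + 1) * β * ρ := by positivity
  constructor
  · intro hge
    have hnum : 0 ≤ β * ρ - γ := by linarith
    have hb0 : 0 ≤ (β * ρ - γ) / ((γ + 1) * β * ρ) := div_nonneg hnum hD.le
    have hb1 : (β * ρ - γ) / ((γ + 1) * β * ρ) < 1 := by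
      rw [div_lt_one hD]; nlinarith [mul_pos hβ hρ]
    set b := (β * ρ - γ) / ((γ + 1) * β * ρ) with hbdef
    have hkey : ∀ c : ℝ, 0 < c → β ≤ c → γ ≤ (1 - b) * c / (b * c + 1 / ρ) := by
      intro c hc hβc
      rw [key ρ γ c b hρ hγ hc hb0]
      have hDc : 0 < (γ + 1) * c * ρ := by positivity
      rw [hbdef, div_mul_eq_mul_div, div_le_iff₀ hD]
      nlinarith [mul_nonneg (mul_nonneg (mul_nonneg (by linarith : (0:ℝ) ≤ γ + 1) hρ.le) hγ.le) (sub_nonneg.mpr hβc)]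
    refine ⟨⟨hb0, hb1⟩, le_min (hkey h hh hβh) (hkey g hg hβg), ?_⟩
    · intro b' hb'0 hb'1 hfeas
      have h1 : γ ≤ (1 - b') * h / (b' * h + 1 / ρ) := le_trans (le_min_iff.mp hfeas).1 (le_refl _)
      have h2 : γ ≤ (1 - b') * g / (b' * g + 1 / ρ) := (le_min_iff.mp hfeas).2
      have hβc : b' * ((γ + 1) * β * ρ) ≤ β * ρ - γ := by
        rcases min_cases h g with ⟨he, _⟩ | ⟨he, _⟩
        · rw [hβdef, he]; exact (key ρ γ h b' hρ hγ hh hb'0).mp h1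
        · rw [hβdef, he]; exact (key ρ γ g b' hρ hγ hg hb'0).mp h2
      have hble : b' ≤ b := by
        rw [hbdef, le_div_iff₀ hD]; linarith
      have := mul_le_mul_of_nonneg_right (mul_le_mul_of_nonneg_right hble hg.le) hρ.le
      linarith
  · intro hlt b hb0 hb1 hfeas
    have h1 : γ ≤ (1 - b) * h / (b * h + 1 / ρ) := (le_min_iff.mp hfeas).1
    have h2 : γ ≤ (1 - b) * g / (b * g + 1 / ρ) := (le_min_iff.mp hfeas).2
    have hβc : b * ((γ + 1) * β * ρ) ≤ β * ρ - γ := by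
      rcases min_cases h g with ⟨he, _⟩ | ⟨he, _⟩
      · rw [hβdef, he]; exact (key ρ γ h b hρ hγ hh hb0).mp h1
      · rw [hβdef, he]; exact (key ρ γ g b hρ hγ hg hb0).mp h2
    nlinarith [mul_nonneg hb0 hD.le]
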